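/- The function G(w) := -e^{e^w + w} Ei(-e^w) takes values in (0,1) for all real w, is monotone increasing, tends to 0 as w → -∞, and tends to 1 as w → +∞; hence G is a cumulative distribution function on ℝ. -/

import Mathlib

open MeasureTheory Real Filter

noncomputable def G (w : ℝ) : ℝ :=
  -exp (exp w + w) * (-(∫ u in Set.Ioi (exp w), exp (-u) / u))

noncomputable def Haux (x : ℝ) : ℝ := ∫ t in Set.Ioi (0:ℝ), x * exp (-t) / (t + x)

lemma expneg_int : IntegrableOn (fun t : ℝ => exp (-t)) (Set.Ioi (0:ℝ)) := by
  simpa using exp_neg_integrableOn_Ioi 0 (one_pos)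

lemma intH {x : ℝ} (hx : 0 < x) :
    IntegrableOn (fun t => x * exp (-t) / (t + x)) (Set.Ioi (0:ℝ)) := by
  apply Integrable.mono' expneg_int
  · apply Measurable.aestronglyMeasurable
    fun_prop
  · filter_upwards [ae_restrict_mem measurableSet_Ioi] with t ht
    have ht' : (0:ℝ) < t := ht
    rw [Real.norm_eq_abs, abs_of_nonneg (by positivity)]
    rw [div_le_iff₀ (by positivity)]
    nlinarith [exp_pos (-t)]

lemma intJ {x : ℝ} (hx : 0 < x) :
    IntegrableOn (fun t => exp (-t) * t / (t + x)) (Set.Ioi (0:ℝ)) := by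
  apply Integrable.mono' expneg_int
  · apply Measurable.aestronglyMeasurable
    fun_prop
  · filter_upwards [ae_restrict_mem measurableSet_Ioi] with t ht
    have ht' : (0:ℝ) < t := ht
    rw [Real.norm_eq_abs, abs_of_nonneg (by positivity)]
    rw [div_le_iff₀ (by positivity)]
    nlinarith [exp_pos (-t)]

lemma G_eq (w : ℝ) : G w = Haux (exp w) := by
  set x := exp w with hxdef
  have hx : 0 < x := exp_pos w
  have h1 : (∫ u in Set.Ioi x, exp (-u) / u)
      = ∫ t in Set.Ioi (0:ℝ), exp (-(t+x)) / (t+x) := by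
    rw [← (measurePreserving_add_right volume x).setIntegral_preimage_emb
      (measurableEmbedding_addRight x) (fun u => exp (-u) / u) (Set.Ioi x)]
    congr 1
    ext t
    simp [Set.mem_Ioi]
  have h2 : G w = (x * exp x) * ∫ t in Set.Ioi (0:ℝ), exp (-(t+x)) / (t+x) := by
    rw [G, ← hxdef, h1, exp_add]
    ring
  rw [h2, Haux, ← integral_const_mul]
  apply setIntegral_congr_fun measurableSet_Ioi
  intro t ht
  have : exp x * exp (-(t + x)) = exp (-t) := by
    rw [← exp_add]; ring_nf
  calc x * exp x * (exp (-(t+x)) / (t+x)) = x * (exp x * exp (-(t + x))) / (t+x) := by ring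
  _ = x * exp (-t) / (t + x) := by rw [this]

lemma H_pos {x : ℝ} (hx : 0 < x) : 0 < Haux x := by
  rw [Haux, setIntegral_pos_iff_support_of_nonneg_ae]
  · have hsub : Set.Ioi (0:ℝ) ⊆ Function.support (fun t => x * exp (-t) / (t + x)) := by
      intro t ht
      have ht' : (0:ℝ) < t := ht
      simp only [Function.mem_support]
      positivity
    rw [Set.inter_eq_right.mpr hsub]
    simp [Real.volume_Ioi]
  · filter_upwards [ae_restrict_mem measurableSet_Ioi] with t ht
    have ht' : (0:ℝ) < t := ht
    positivity
  · exact intH hx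

lemma J_pos {x : ℝ} (hx : 0 < x) :
    0 < ∫ t in Set.Ioi (0:ℝ), exp (-t) * t / (t + x) := by
  rw [setIntegral_pos_iff_support_of_nonneg_ae]
  · have hsub : Set.Ioi (0:ℝ) ⊆ Function.support (fun t => exp (-t) * t / (t + x)) := by
      intro t ht
      have ht' : (0:ℝ) < t := ht
      simp only [Function.mem_support]
      positivity
    rw [Set.inter_eq_right.mpr hsub]
    simp [Real.volume_Ioi]
  · filter_upwards [ae_restrict_mem measurableSet_Ioi] with t ht
    have ht' : (0:ℝ) < t := ht
    positivity
  · exact intJ hx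

lemma H_add_J {x : ℝ} (hx : 0 < x) :
    Haux x + (∫ t in Set.Ioi (0:ℝ), exp (-t) * t / (t + x)) = 1 := by
  rw [Haux, ← integral_add (intH hx) (intJ hx)]
  have : ∀ t ∈ Set.Ioi (0:ℝ),
      x * exp (-t) / (t + x) + exp (-t) * t / (t + x) = exp (-t) := by
    intro t ht
    have ht' : (0:ℝ) < t := ht
    field_simp
    ring
  rw [setIntegral_congr_fun measurableSet_Ioi this]
  simpa using integral_exp_neg_Ioi 0

lemma H_lt_one {x : ℝ} (hx : 0 < x) : Haux x < 1 := by
  have := H_add_J hx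
  have := J_pos hx
  linarith

lemma H_mono {x y : ℝ} (hx : 0 < x) (hxy : x ≤ y) : Haux x ≤ Haux y := by
  have hy : 0 < y := lt_of_lt_of_le hx hxy
  apply setIntegral_mono_on (intH hx) (intH hy) measurableSet_Ioi
  intro t ht
  have ht' : (0:ℝ) < t := ht
  rw [div_le_div_iff₀ (by positivity) (by positivity)]
  nlinarith [mul_nonneg (mul_nonneg (exp_pos (-t)).le ht'.le) (sub_nonneg.mpr hxy)]

lemma H_le {x : ℝ} (hx : 0 < x) :
    Haux x ≤ Real.sqrt x * ∫ t in Set.Ioi (0:ℝ), exp (-t) * t ^ ((1:ℝ)/2 - 1) := by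
  have hint : IntegrableOn (fun t : ℝ => exp (-t) * t ^ ((1:ℝ)/2 - 1)) (Set.Ioi 0) :=
    Real.GammaIntegral_convergent (by norm_num)
  rw [Haux, ← integral_const_mul]
  apply setIntegral_mono_on (intH hx) (hint.const_mul _) measurableSet_Ioi
  intro t ht
  have ht' : (0:ℝ) < t := ht
  have hrw : t ^ ((1:ℝ)/2 - 1) = (Real.sqrt t)⁻¹ := by
    rw [show (1:ℝ)/2 - 1 = -(1/2) by norm_num, Real.rpow_neg ht'.le, ← Real.sqrt_eq_rpow]
  rw [hrw]
  have hst : 0 < Real.sqrt t := Real.sqrt_pos.mpr ht'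
  have hsx : 0 < Real.sqrt x := Real.sqrt_pos.mpr hx
  have h2t : Real.sqrt t ^ 2 = t := Real.sq_sqrt ht'.le
  have h2x : Real.sqrt x ^ 2 = x := Real.sq_sqrt hx.le
  have key : x / (t + x) ≤ Real.sqrt x / Real.sqrt t := by
    rw [div_le_div_iff₀ (by positivity) hst]
    nlinarith [mul_nonneg hsx.le (sq_nonneg (Real.sqrt t - Real.sqrt x)),
      mul_pos (mul_pos hsx hst) hsx]
  calc x * exp (-t) / (t + x) = exp (-t) * (x / (t + x)) := by ring
  _ ≤ exp (-t) * (Real.sqrt x / Real.sqrt t) :=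
      mul_le_mul_of_nonneg_left key (exp_pos (-t)).le
  _ = Real.sqrt x * (exp (-t) * (Real.sqrt t)⁻¹) := by ring

lemma J_le {x : ℝ} (hx : 0 < x) :
    (∫ t in Set.Ioi (0:ℝ), exp (-t) * t / (t + x))
      ≤ x⁻¹ * ∫ t in Set.Ioi (0:ℝ), exp (-t) * t ^ ((2:ℝ) - 1) := by
  have hint : IntegrableOn (fun t : ℝ => exp (-t) * t ^ ((2:ℝ) - 1)) (Set.Ioi 0) :=
    Real.GammaIntegral_convergent (by norm_num)
  rw [← integral_const_mul]
  apply setIntegral_mono_on (intJ hx) (hint.const_mul _) measurableSet_Ioi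
  intro t ht
  have ht' : (0:ℝ) < t := ht
  have hrw : t ^ ((2:ℝ) - 1) = t := by norm_num
  rw [hrw]
  calc exp (-t) * t / (t + x) ≤ exp (-t) * t / x :=
      div_le_div_of_nonneg_left (by positivity) hx (by linarith)
  _ = x⁻¹ * (exp (-t) * t) := by field_simp

theorem G_is_cdf :
    (∀ w : ℝ, G w ∈ Set.Ioo (0 : ℝ) 1) ∧ Monotone G ∧
      Tendsto G atBot (nhds 0) ∧ Tendsto G atTop (nhds 1) := by
  refine ⟨fun w => ⟨by rw [G_eq]; exact H_pos (exp_pos w),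
      by rw [G_eq]; exact H_lt_one (exp_pos w)⟩,
    fun a b hab => by rw [G_eq, G_eq]; exact H_mono (exp_pos a) (exp_le_exp.mpr hab), ?_, ?_⟩
  · -- atBot
    set C : ℝ := ∫ t in Set.Ioi (0:ℝ), exp (-t) * t ^ ((1:ℝ)/2 - 1) with hC
    have hupper : Tendsto (fun w => Real.sqrt (exp w) * C) atBot (nhds 0) := by
      have h1 : Tendsto (fun w => Real.sqrt (exp w)) atBot (nhds 0) := by
        have := (Real.continuous_sqrt.tendsto 0).comp tendsto_exp_atBot
        simpa [Function.comp_def] using this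
      simpa using h1.mul_const C
    refine tendsto_of_tendsto_of_tendsto_of_le_of_le tendsto_const_nhds hupper
      (fun w => ?_) (fun w => ?_)
    · rw [G_eq]; exact (H_pos (exp_pos w)).le
    · rw [G_eq]; exact H_le (exp_pos w)
  · -- atTop
    set D : ℝ := ∫ t in Set.Ioi (0:ℝ), exp (-t) * t ^ ((2:ℝ) - 1) with hD
    have hlower : Tendsto (fun w => 1 - (exp w)⁻¹ * D) atTop (nhds 1) := by
      have h1 : Tendsto (fun w : ℝ => (exp w)⁻¹) atTop (nhds 0) :=
        tendsto_exp_atTop.inv_tendsto_atTop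
      have h2 : Tendsto (fun w : ℝ => (exp w)⁻¹ * D) atTop (nhds 0) := by
        simpa using h1.mul_const D
      simpa using (tendsto_const_nhds (x := (1:ℝ)) (f := atTop)).sub h2
    refine tendsto_of_tendsto_of_tendsto_of_le_of_le hlower tendsto_const_nhds
      (fun w => ?_) (fun w => ?_)
    · rw [G_eq]
      have h := H_add_J (exp_pos w)
      have h2 := J_le (exp_pos w)
      rw [← hD] at h2
      linarith
    · rw [G_eq]; exact (H_lt_one (exp_pos w)).le
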